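/- Let $a \ge 0$ and $b$ with $a - b \ge 1$. Let $F : (0,\infty) \to \mathbb{R}$ be right-continuous, non-increasing, and nonnegative, and let $f$ be a nonnegative Radon measure on $(0,\infty)$ with $f([1,\infty)) > 0$ and $\int_{[1,\infty)} x^a f(dx) < \infty$. Then there exists $\delta_0 \in (0,1)$ depending only on $a$ such that: if $0 < \delta \le \delta_0$, $R_0 > 1/\delta$, $C > 0$, and $-\int_{[1,\delta R]} [F(R-y) - F(R)]\, y^b f(dy) \le -C/R^{a+1}$ for all $R \ge R_0$, then (when $a > 0$) there exist $R_0' \ge R_0$ and $B > 0$ with $F(R) \ge B/R^a$ for all $R \ge R_0'$. -/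

import Mathlib

open MeasureTheory Set
open ENNReal NNReal

lemma telescope_aux (F : ℝ → ℝ) (hFa : AntitoneOn F (Set.Ioi 0))
    (hFnn : ∀ x : ℝ, 0 < x → 0 ≤ F x)
    (δ S y : ℝ) (hδ : 0 < δ) (hδ2 : δ ≤ 1/2) (hS : 2 < S) (hy : 1 ≤ y) (N : ℕ) :
    ∑ k ∈ Finset.range N,
        (if y ≤ δ * (S + k) then F (S + k - ⌈y⌉₊) - F (S + k) else 0)
      ≤ (⌈y⌉₊ : ℝ) * F ((1 - δ) * S - 1) := by
  have hy0 : (0:ℝ) < y := by linarith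
  have hSpos : (0:ℝ) < S := by linarith
  set m : ℕ := ⌈y⌉₊ with hm
  have hym : y ≤ (m:ℝ) := Nat.le_ceil y
  have hm2 : (m:ℝ) ≤ y + 1 := (Nat.ceil_lt_add_one hy0.le).le
  have hF0arg : 0 < (1 - δ) * S - 1 := by
    nlinarith [mul_le_mul_of_nonneg_right hδ2 hSpos.le]
  have hF0 : 0 ≤ F ((1 - δ) * S - 1) := hFnn _ hF0arg
  have hex : ∃ k : ℕ, y ≤ δ * (S + k) := by
    refine ⟨⌈y / δ⌉₊, ?_⟩
    have h1 : y / δ ≤ (⌈y / δ⌉₊ : ℝ) := Nat.le_ceil _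
    have h2 : y = δ * (y / δ) := by field_simp
    nlinarith [Nat.cast_nonneg (α := ℝ) (⌈y / δ⌉₊)]
  set k0 : ℕ := Nat.find hex with hk0def
  have hk0 : y ≤ δ * (S + k0) := Nat.find_spec hex
  have hargm : ∀ k : ℕ, k0 ≤ k → (1 - δ) * S - 1 ≤ S + k - m ∧ 0 < S + (k:ℝ) - m := by
    intro k hk
    have hck : (k0:ℝ) ≤ k := Nat.cast_le.mpr hk
    have hkn : (0:ℝ) ≤ k := Nat.cast_nonneg k
    have h₁ : (1 - δ) * S - 1 ≤ S + k - m := by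
      nlinarith [mul_nonneg hδ.le (sub_nonneg.mpr hck),
        mul_nonneg (by linarith : (0:ℝ) ≤ 1 - δ) hkn]
    exact ⟨h₁, lt_of_lt_of_le hF0arg h₁⟩
  by_cases hN : N ≤ k0
  · have hz : ∀ k ∈ Finset.range N,
        (if y ≤ δ * (S + k) then F (S + k - m) - F (S + k) else 0) = 0 := by
      intro k hk
      rw [if_neg (Nat.find_min hex (lt_of_lt_of_le (Finset.mem_range.mp hk) hN))]
    rw [Finset.sum_eq_zero hz]
    exact mul_nonneg (Nat.cast_nonneg m) hF0
  · push_neg at hN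
    set u : ℕ → ℝ := fun k => F (S + k - m) with hu
    set v : ℕ → ℝ := fun k => F (S + k) with hv
    have hSk : ∀ k : ℕ, (0:ℝ) < S + k := by
      intro k; have := Nat.cast_nonneg (α := ℝ) k; linarith
    have hvnn : ∀ k : ℕ, 0 ≤ v k := fun k => hFnn _ (hSk k)
    have hunn : ∀ k : ℕ, k0 ≤ k → 0 ≤ u k := fun k hk => hFnn _ (hargm k hk).2
    have hsub : Finset.Ico k0 N ⊆ Finset.range N := fun x hx =>
      Finset.mem_range.mpr (Finset.mem_Ico.mp hx).2
    have hsum1 : ∑ k ∈ Finset.range N,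
        (if y ≤ δ * (S + k) then F (S + k - m) - F (S + k) else 0)
        = ∑ k ∈ Finset.Ico k0 N, (u k - v k) := by
      rw [← Finset.sum_subset hsub (fun x hx hx' => ?_)]
      · refine Finset.sum_congr rfl (fun k hk => ?_)
        have hk' : k0 ≤ k := (Finset.mem_Ico.mp hk).1
        have hck : (k0:ℝ) ≤ k := Nat.cast_le.mpr hk'
        rw [if_pos (by nlinarith)]
      · have hxN : x < N := Finset.mem_range.mp hx
        have hxk0 : x < k0 := by
          by_contra h
          exact hx' (Finset.mem_Ico.mpr ⟨Nat.le_of_not_lt h, hxN⟩)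
        rw [if_neg (Nat.find_min hex hxk0)]
    rw [hsum1, Finset.sum_sub_distrib]
    have hblock : ∑ k ∈ Finset.Ico k0 (k0 + m), u k ≤ (m:ℝ) * F ((1 - δ) * S - 1) := by
      have hle : ∀ k ∈ Finset.Ico k0 (k0 + m), u k ≤ F ((1 - δ) * S - 1) := by
        intro k hk
        have hk' : k0 ≤ k := (Finset.mem_Ico.mp hk).1
        exact hFa (mem_Ioi.mpr hF0arg) (mem_Ioi.mpr (hargm k hk').2) (hargm k hk').1
      have h := Finset.sum_le_card_nsmul _ _ _ hle
      rwa [Nat.card_Ico, Nat.add_sub_cancel_left, nsmul_eq_mul] at h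
    by_cases hNm : N ≤ k0 + m
    · have h1 : ∑ k ∈ Finset.Ico k0 N, u k ≤ ∑ k ∈ Finset.Ico k0 (k0 + m), u k :=
        Finset.sum_le_sum_of_subset_of_nonneg (Finset.Ico_subset_Ico le_rfl hNm)
          (fun k hk _ => hunn k (Finset.mem_Ico.mp hk).1)
      have h2 : (0:ℝ) ≤ ∑ k ∈ Finset.Ico k0 N, v k := Finset.sum_nonneg fun k _ => hvnn k
      linarith
    · push_neg at hNm
      have hcons : ∑ k ∈ Finset.Ico k0 (k0 + m), u k + ∑ k ∈ Finset.Ico (k0 + m) N, u k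
          = ∑ k ∈ Finset.Ico k0 N, u k :=
        Finset.sum_Ico_consecutive _ (Nat.le_add_right _ _) hNm.le
      have hshift : ∑ k ∈ Finset.Ico (k0 + m) N, u k = ∑ k ∈ Finset.Ico k0 (N - m), v k := by
        rw [Finset.sum_Ico_eq_sum_range, Finset.sum_Ico_eq_sum_range]
        have hnn : N - (k0 + m) = N - m - k0 := by omega
        rw [hnn]
        refine Finset.sum_congr rfl fun i _ => ?_
        show F (S + ((k0 + m + i : ℕ):ℝ) - m) = F (S + ((k0 + i : ℕ):ℝ))
        congr 1
        push_cast
        ring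
      have h3 : ∑ k ∈ Finset.Ico k0 (N - m), v k ≤ ∑ k ∈ Finset.Ico k0 N, v k :=
        Finset.sum_le_sum_of_subset_of_nonneg
          (Finset.Ico_subset_Ico le_rfl (Nat.sub_le N m)) (fun k _ _ => hvnn k)
      linarith

theorem stmt_9 (a b : ℝ) (ha : 0 < a) (hab : 1 ≤ a - b) :
    ∃ δ0 : ℝ, 0 < δ0 ∧ δ0 < 1 ∧
      ∀ (F : ℝ → ℝ) (f : Measure ℝ) (δ R0 C : ℝ),
        (∀ x : ℝ, 0 < x → ContinuousWithinAt F (Set.Ici x) x) →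
        AntitoneOn F (Set.Ioi 0) →
        (∀ R : ℝ, 0 < R → 0 ≤ F R) →
        0 < f (Set.Ici 1) →
        (∫⁻ x in Set.Ici 1, ENNReal.ofReal (x ^ a) ∂f) ≠ ⊤ →
        0 < δ → δ ≤ δ0 → 1 / δ < R0 → 0 < C →
        (∀ R : ℝ, R0 ≤ R →
          -(∫ y in Set.Icc 1 (δ * R), (F (R - y) - F R) * y ^ b ∂f) ≤
            -(C / R ^ (a + 1))) →
        ∃ R0' B : ℝ, R0 ≤ R0' ∧ 0 < B ∧ ∀ R : ℝ, R0' ≤ R → B / R ^ a ≤ F R := by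
  refine ⟨1/2, by norm_num, by norm_num, ?_⟩
  intro F f δ R0 C _hFc hFa hFnn hf1 hfa hδ hδ2 hR0δ hC hyp
  have h2δ : (2:ℝ) ≤ 1/δ := by
    rw [le_div_iff₀ hδ]; linarith
  have hR0 : 2 < R0 := lt_of_le_of_lt h2δ hR0δ
  -- integrability of y ^ a on Ici 1
  have hmeas : Measurable fun y : ℝ => y ^ a := (Real.continuous_rpow_const ha.le).measurable
  have hint1 : IntegrableOn (fun y : ℝ => y ^ a) (Ici 1) f := by
    refine ⟨hmeas.aestronglyMeasurable, ?_⟩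
    have heq : ∫⁻ y in Ici 1, (‖y ^ a‖₊ : ℝ≥0∞) ∂f = ∫⁻ y in Ici 1, ENNReal.ofReal (y ^ a) ∂f := by
      refine setLIntegral_congr_fun measurableSet_Ici (fun y hy => ?_)
      exact Real.enorm_eq_ofReal (Real.rpow_nonneg (le_trans zero_le_one hy) a)
    show (∫⁻ y in Ici 1, (‖y ^ a‖₊ : ℝ≥0∞) ∂f) < ⊤
    rw [heq]
    exact hfa.lt_top
  set M' := (∫ y in Ici 1, y ^ a ∂f) with hM'def
  have hone_le : ∀ y : ℝ, y ∈ Ici (1:ℝ) → (1:ℝ) ≤ y ^ a := by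
    intro y hy
    calc (1:ℝ) = y ^ (0:ℝ) := (Real.rpow_zero y).symm
    _ ≤ y ^ a := Real.rpow_le_rpow_of_exponent_le hy ha.le
  have hf1top : f (Ici 1) ≠ ⊤ := by
    have hle : f (Ici 1) ≤ ∫⁻ y in Ici 1, ENNReal.ofReal (y ^ a) ∂f := by
      rw [← setLIntegral_one]
      refine setLIntegral_mono (hmeas.ennreal_ofReal) (fun y hy => ?_)
      rw [show (1:ℝ≥0∞) = ENNReal.ofReal 1 by simp]
      exact ENNReal.ofReal_le_ofReal (hone_le y hy)
    exact ne_top_of_le_ne_top hfa hle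
  have hM'pos : 0 < M' := by
    have h1 : (f (Ici 1)).toReal ≤ M' := by
      have hc : IntegrableOn (fun _ : ℝ => (1:ℝ)) (Ici 1) f :=
        integrableOn_const hf1top
      have h := setIntegral_mono_on hc hint1 measurableSet_Ici hone_le
      simp at h; rw [hM'def]; exact h
    have h2 : 0 < (f (Ici 1)).toReal := ENNReal.toReal_pos hf1.ne' hf1top
    linarith
  -- key estimate
  have key : ∀ S : ℝ, R0 ≤ S →
      C / ((3:ℝ) ^ (a+1) * S ^ a) ≤ 2 * F ((1 - δ) * S - 1) * M' := by
    intro S hS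
    have hS2 : 2 < S := lt_of_lt_of_le hR0 hS
    have hSpos : 0 < S := by linarith
    have hF0arg : 0 < (1 - δ) * S - 1 := by
      nlinarith [mul_le_mul_of_nonneg_right hδ2 hSpos.le]
    have hF0 : 0 ≤ F ((1 - δ) * S - 1) := hFnn _ hF0arg
    set N := ⌈S⌉₊ with hNdef
    have hN1 : S ≤ (N:ℝ) := Nat.le_ceil S
    have hN2 : (N:ℝ) ≤ S + 1 := (Nat.ceil_lt_add_one hSpos.le).le
    have hSk : ∀ k : ℕ, (0:ℝ) < S + k := by
      intro k; have := Nat.cast_nonneg (α := ℝ) k; linarith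
    have hIlb : ∀ k : ℕ, C / (S + k) ^ (a+1)
        ≤ ∫ y in Icc 1 (δ * (S + k)), (F (S + k - y) - F (S + k)) * y ^ b ∂f := by
      intro k
      have h := hyp (S + k) (by have := Nat.cast_nonneg (α := ℝ) k; linarith)
      linarith
    have hIpos : ∀ k : ℕ, 0 < C / (S + k) ^ (a+1) := fun k => by
      have h := hSk k; positivity
    have hint_k : ∀ k : ℕ, IntegrableOn
        (fun y => (F (S + k - y) - F (S + k)) * y ^ b) (Icc 1 (δ * (S + k))) f := by
      intro k
      by_contra h
      have h1 := hIlb k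
      rw [integral_undef h] at h1
      exact absurd h1 (not_le.mpr (hIpos k))
    set g : ℕ → ℝ → ℝ := fun k => (Icc 1 (δ * (S + k))).indicator
        (fun y => (F (S + k - y) - F (S + k)) * y ^ b) with hgdef
    have hg_int : ∀ k : ℕ, Integrable (g k) (f.restrict (Ici 1)) := fun k =>
      ((hint_k k).integrable_indicator measurableSet_Icc).restrict
    have hg_eq : ∀ k : ℕ, ∫ y in Ici 1, g k y ∂f
        = ∫ y in Icc 1 (δ * (S + k)), (F (S + k - y) - F (S + k)) * y ^ b ∂f := by
      intro k
      simp only [hgdef]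
      rw [setIntegral_indicator measurableSet_Icc,
        Set.inter_eq_self_of_subset_right Set.Icc_subset_Ici_self]
    have hsum_int : ∑ k ∈ Finset.range N, (∫ y in Ici 1, g k y ∂f)
        = ∫ y in Ici 1, (∑ k ∈ Finset.range N, g k y) ∂f :=
      (integral_finset_sum _ (fun k _ => hg_int k)).symm
    have hptwise : ∀ y ∈ Ici (1:ℝ), (∑ k ∈ Finset.range N, g k y)
        ≤ 2 * F ((1 - δ) * S - 1) * y ^ a := by
      intro y hy
      have hy1 : (1:ℝ) ≤ y := hy
      have hy0 : (0:ℝ) < y := by linarith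
      have hterm : ∀ k ∈ Finset.range N, g k y ≤
          (if y ≤ δ * (S + k) then F (S + k - ⌈y⌉₊) - F (S + k) else 0) * y ^ (a - 1) := by
        intro k _
        by_cases hky : y ≤ δ * (S + k)
        · rw [if_pos hky]
          simp only [hgdef]
          rw [Set.indicator_of_mem (Set.mem_Icc.mpr ⟨hy1, hky⟩)]
          have hSkk := hSk k
          have hSk2 : (2:ℝ) < S + k := by have := Nat.cast_nonneg (α := ℝ) k; linarith
          have ha1 : 0 < S + k - y := by nlinarith
          have ha2 : 0 < S + k - (⌈y⌉₊:ℝ) := by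
            have h1 : (⌈y⌉₊:ℝ) ≤ y + 1 := (Nat.ceil_lt_add_one hy0.le).le
            nlinarith
          have ha3 : S + k - (⌈y⌉₊:ℝ) ≤ S + k - y := by
            have := Nat.le_ceil y; linarith
          have hFd1 : F (S + k - y) ≤ F (S + k - ⌈y⌉₊) :=
            hFa (mem_Ioi.mpr ha2) (mem_Ioi.mpr ha1) ha3
          have hFd2 : F (S + k) ≤ F (S + k - y) :=
            hFa (mem_Ioi.mpr ha1) (mem_Ioi.mpr (hSk k)) (by linarith)
          have hyb : y ^ b ≤ y ^ (a - 1) :=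
            Real.rpow_le_rpow_of_exponent_le hy1 (by linarith)
          have hybnn : 0 ≤ y ^ b := Real.rpow_nonneg hy0.le b
          exact mul_le_mul (by linarith) hyb hybnn (by linarith)
        · rw [if_neg hky, zero_mul]
          simp only [hgdef]
          rw [Set.indicator_of_notMem (fun hmem => hky (Set.mem_Icc.mp hmem).2)]
      have hya : y ^ (a - 1) * y = y ^ a := by
        have h := Real.rpow_add hy0 (a - 1) 1
        rw [Real.rpow_one] at h
        rw [show a - 1 + 1 = a by ring] at h
        linarith
      have hceil : (⌈y⌉₊:ℝ) ≤ 2 * y := by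
        have := (Nat.ceil_lt_add_one hy0.le).le; linarith
      have hrnn : 0 ≤ y ^ (a - 1) := Real.rpow_nonneg hy0.le _
      calc ∑ k ∈ Finset.range N, g k y
          ≤ ∑ k ∈ Finset.range N,
            (if y ≤ δ * (S + k) then F (S + k - ⌈y⌉₊) - F (S + k) else 0) * y ^ (a-1) :=
            Finset.sum_le_sum hterm
        _ = (∑ k ∈ Finset.range N,
            (if y ≤ δ * (S + k) then F (S + k - ⌈y⌉₊) - F (S + k) else 0)) * y ^ (a-1) :=
            (Finset.sum_mul _ _ _).symm
        _ ≤ ((⌈y⌉₊:ℝ) * F ((1 - δ) * S - 1)) * y ^ (a-1) :=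
            mul_le_mul_of_nonneg_right
              (telescope_aux F hFa hFnn δ S y hδ hδ2 hS2 hy1 N) hrnn
        _ ≤ ((2 * y) * F ((1 - δ) * S - 1)) * y ^ (a-1) :=
            mul_le_mul_of_nonneg_right (mul_le_mul_of_nonneg_right hceil hF0) hrnn
        _ = 2 * F ((1 - δ) * S - 1) * y ^ a := by
            rw [← hya]; ring
    have hib : ∫ y in Ici 1, (∑ k ∈ Finset.range N, g k y) ∂f
        ≤ ∫ y in Ici 1, 2 * F ((1 - δ) * S - 1) * y ^ a ∂f := by
      refine setIntegral_mono_on (integrable_finset_sum _ (fun k _ => hg_int k))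
        (hint1.const_mul _) measurableSet_Ici hptwise
    have hconst : ∫ y in Ici 1, 2 * F ((1 - δ) * S - 1) * y ^ a ∂f
        = 2 * F ((1 - δ) * S - 1) * M' := by
      rw [hM'def, ← integral_const_mul]
    -- lower bound for the sum
    have hlb : C / ((3:ℝ) ^ (a+1) * S ^ a)
        ≤ ∑ k ∈ Finset.range N, C / (S + k) ^ (a+1) := by
      have hterm : ∀ k ∈ Finset.range N, C / (3 * S) ^ (a+1) ≤ C / (S + k) ^ (a+1) := by
        intro k hk
        have hkN : (k:ℝ) ≤ (N:ℝ) - 1 := by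
          have h1 := Finset.mem_range.mp hk
          have h2 : (k:ℝ) + 1 ≤ N := by exact_mod_cast h1
          linarith
        have h3S : S + k ≤ 3 * S := by linarith
        have hrp : (S + k) ^ (a+1) ≤ (3 * S) ^ (a+1) :=
          Real.rpow_le_rpow (hSk k).le h3S (by linarith)
        have hp1 : (0:ℝ) < (S + k) ^ (a+1) := Real.rpow_pos_of_pos (hSk k) _
        have hp2 : (0:ℝ) < (3 * S) ^ (a+1) := Real.rpow_pos_of_pos (by linarith) _
        exact div_le_div_of_nonneg_left hC.le hp1 hrp
      have hcard := Finset.card_nsmul_le_sum (Finset.range N) _ _ hterm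
      rw [Finset.card_range, nsmul_eq_mul] at hcard
      have hp2 : (0:ℝ) < (3 * S) ^ (a+1) := Real.rpow_pos_of_pos (by linarith) _
      have hSle : S * (C / (3*S) ^ (a+1)) ≤ (N:ℝ) * (C / (3*S) ^ (a+1)) :=
        mul_le_mul_of_nonneg_right hN1 (by positivity)
      have heq : S * (C / (3*S) ^ (a+1)) = C / ((3:ℝ) ^ (a+1) * S ^ a) := by
        have e1 : (3*S) ^ (a+1) = (3:ℝ) ^ (a+1) * (S ^ a * S) := by
          rw [Real.mul_rpow (by norm_num) hSpos.le, Real.rpow_add hSpos, Real.rpow_one]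
        rw [e1]
        have h3 : ((3:ℝ) ^ (a+1)) ≠ 0 := (Real.rpow_pos_of_pos (by norm_num) _).ne'
        have hSa : S ^ a ≠ 0 := (Real.rpow_pos_of_pos hSpos _).ne'
        field_simp
      linarith
    calc C / ((3:ℝ) ^ (a+1) * S ^ a) ≤ ∑ k ∈ Finset.range N, C / (S + k) ^ (a+1) := hlb
      _ ≤ ∑ k ∈ Finset.range N, (∫ y in Ici 1, g k y ∂f) :=
        Finset.sum_le_sum (fun k _ => by rw [hg_eq k]; exact hIlb k)
      _ = ∫ y in Ici 1, (∑ k ∈ Finset.range N, g k y) ∂f := hsum_int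
      _ ≤ ∫ y in Ici 1, 2 * F ((1 - δ) * S - 1) * y ^ a ∂f := hib
      _ = 2 * F ((1 - δ) * S - 1) * M' := hconst
  -- conclusion
  have h1δ : (0:ℝ) < 1 - δ := by linarith
  have h3 : (0:ℝ) < 3 ^ (a+1) := Real.rpow_pos_of_pos (by norm_num) _
  have h4 : (0:ℝ) < 4 ^ a := Real.rpow_pos_of_pos (by norm_num) _
  have hB : 0 < C / (2 * 3 ^ (a+1) * 4 ^ a * M') := by
    apply div_pos hC
    positivity
  refine ⟨R0, C / (2 * 3 ^ (a+1) * 4 ^ a * M'), le_refl R0, hB, ?_⟩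
  intro U hU
  have hU2 : 2 < U := lt_of_lt_of_le hR0 hU
  have hUpos : (0:ℝ) < U := by linarith
  set S := (U + 1) / (1 - δ) with hSdef
  have hSU : U + 1 ≤ S := by
    rw [hSdef, le_div_iff₀ h1δ]; nlinarith
  have hSR0 : R0 ≤ S := by linarith
  have harg : (1 - δ) * S - 1 = U := by
    rw [hSdef]; field_simp; ring
  have hkey := key S hSR0
  rw [harg] at hkey
  have hS4U : S ≤ 4 * U := by
    rw [hSdef, div_le_iff₀ h1δ]; nlinarith
  have hSpos : (0:ℝ) < S := by linarith
  have hSa : S ^ a ≤ 4 ^ a * U ^ a := by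
    calc S ^ a ≤ (4*U) ^ a := Real.rpow_le_rpow hSpos.le hS4U ha.le
    _ = 4 ^ a * U ^ a := Real.mul_rpow (by norm_num) hUpos.le
  have hUa : 0 < U ^ a := Real.rpow_pos_of_pos hUpos a
  have hSa0 : 0 < S ^ a := Real.rpow_pos_of_pos hSpos a
  have hd : C / (3 ^ (a+1) * (4 ^ a * U ^ a)) ≤ C / (3 ^ (a+1) * S ^ a) := by
    exact div_le_div_of_nonneg_left hC.le (by positivity)
      (mul_le_mul_of_nonneg_left hSa h3.le)
  have hcomb : C / (3 ^ (a+1) * (4 ^ a * U ^ a)) ≤ 2 * F U * M' := le_trans hd hkey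
  rw [div_le_iff₀ (by positivity : (0:ℝ) < 3 ^ (a+1) * (4 ^ a * U ^ a))] at hcomb
  rw [div_le_iff₀ hUa, div_le_iff₀ (by positivity : (0:ℝ) < 2 * 3 ^ (a+1) * 4 ^ a * M')]
  have he : 2 * F U * M' * (3 ^ (a+1) * (4 ^ a * U ^ a))
      = F U * U ^ a * (2 * 3 ^ (a+1) * 4 ^ a * M') := by ring
  linarith
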